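/- Let N > 2 be a real number, set c* = (N−2)^{(N−2)/2} / N^{(N+2)/2} and a = √((N−2)/N), and define F(v) = (v²−1)/N + 2c*·v^{2−N} for v > 0. Then there exists a unique differentiable function v : ℝ → ℝ such that v(t) > a for all t, v(0) = 1, and v′(t) = √(F(v(t))) for all t ∈ ℝ. Moreover, v is strictly increasing, v(t) → a as t → −∞, and v(t) → ∞ as t → ∞. -/

import Mathlib

open Real Filter Set Topology

set_option maxHeartbeats 1000000 in
theorem stmt_14 (N : ℝ) (hN : 2 < N)
    (cs a : ℝ) (hcs : cs = (N - 2) ^ ((N - 2) / 2) / N ^ ((N + 2) / 2))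
    (ha : a = Real.sqrt ((N - 2) / N))
    (F : ℝ → ℝ) (hF : ∀ v, F v = (v ^ 2 - 1) / N + 2 * cs * v ^ (2 - N)) :
    (∃! v : ℝ → ℝ, (∀ t, a < v t) ∧ v 0 = 1 ∧
      ∀ t, HasDerivAt v (Real.sqrt (F (v t))) t) ∧
    (∀ v : ℝ → ℝ, ((∀ t, a < v t) ∧ v 0 = 1 ∧ ∀ t, HasDerivAt v (Real.sqrt (F (v t))) t) →
      StrictMono v ∧ Filter.Tendsto v Filter.atBot (𝓝 a) ∧
        Filter.Tendsto v Filter.atTop Filter.atTop) := by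
  have hN0 : (0:ℝ) < N := by linarith
  have hN2 : (0:ℝ) < N - 2 := by linarith
  have hx0 : (0:ℝ) < (N-2)/N := div_pos hN2 hN0
  have ha0 : 0 < a := by rw [ha]; exact Real.sqrt_pos.2 hx0
  have ha2 : a ^ 2 = (N-2)/N := by rw [ha, Real.sq_sqrt hx0.le]
  have hx1 : (N-2)/N < 1 := by rw [div_lt_one hN0]; linarith
  have ha1 : a < 1 := by nlinarith
  have hcs0 : 0 < cs := by
    rw [hcs]; exact div_pos (Real.rpow_pos_of_pos hN2 _) (Real.rpow_pos_of_pos hN0 _)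
  -- key rpow identity
  have hkey : 2 * cs * a ^ (2 - N) = 2 / N ^ 2 := by
    have h1 : a ^ (2 - N) = ((N-2)/N) ^ ((2 - N)/2) := by
      rw [ha, Real.sqrt_eq_rpow, ← Real.rpow_mul hx0.le]
      congr 1; ring
    have e1 : (N-2) ^ ((N-2)/2) * (N-2) ^ ((2-N)/2) = 1 := by
      rw [← Real.rpow_add hN2, show (N-2)/2 + (2-N)/2 = (0:ℝ) by ring, Real.rpow_zero]
    have e2 : N ^ ((N+2)/2) * N ^ ((2-N)/2) = N ^ 2 := by
      rw [← Real.rpow_add hN0, show (N+2)/2 + (2-N)/2 = ((2:ℕ):ℝ) by push_cast; ring,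
        Real.rpow_natCast]
    have p1 : (0:ℝ) < N ^ ((N+2)/2) := Real.rpow_pos_of_pos hN0 _
    have p2 : (0:ℝ) < N ^ ((2-N)/2) := Real.rpow_pos_of_pos hN0 _
    rw [h1, hcs, Real.div_rpow hN2.le hN0.le]
    field_simp
    nlinarith [e1, e2, p1, p2, Real.rpow_pos_of_pos hN2 ((N-2)/2)]
  have ha2' : a ^ 2 * N = N - 2 := by
    rw [ha2]; field_simp
  have hkey1 : 2 * cs * (2 - N) * a ^ (1 - N) = -(2 * a / N) := by
    have h1 : a ^ (1 - N) = a ^ (2 - N) / a := by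
      rw [eq_div_iff ha0.ne', ← Real.rpow_add_one ha0.ne']
      congr 1; ring
    have h3 : 2 * cs * (2 - N) * a ^ (1 - N) = (2 - N) * ((2 / N ^ 2) / a) := by
      rw [h1, ← hkey]; ring
    rw [h3]
    field_simp
    nlinarith [ha2']
  have hFa : F a = 0 := by
    rw [hF, ha2, hkey]; field_simp; ring
  -- derivatives of F
  set F1 : ℝ → ℝ := fun v => 2 * v / N + 2 * cs * (2 - N) * v ^ (1 - N) with hF1def
  set F2 : ℝ → ℝ := fun v => 2 / N + 2 * cs * (2 - N) * (1 - N) * v ^ (-N) with hF2def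
  have hFd : ∀ v : ℝ, 0 < v → HasDerivAt F (F1 v) v := by
    intro v hv
    have h1 : HasDerivAt (fun w : ℝ => (w ^ 2 - 1) / N) (2 * v / N) v := by
      have := ((hasDerivAt_pow 2 v).sub_const 1).div_const N
      exact this.congr_deriv (by norm_num)
    have h2 : HasDerivAt (fun w : ℝ => w ^ (2 - N)) ((2 - N) * v ^ (1 - N)) v := by
      have := Real.hasDerivAt_rpow_const (x := v) (p := 2 - N) (Or.inl hv.ne')
      convert this using 2; ring
    have := h1.add ((h2.const_mul (2 * cs)))
    refine HasDerivAt.congr_deriv (this.congr_of_eventuallyEq ?_) (by simp [hF1def]; ring)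
    filter_upwards with w; rw [hF]; rfl
  have hF1d : ∀ v : ℝ, 0 < v → HasDerivAt F1 (F2 v) v := by
    intro v hv
    have h2 : HasDerivAt (fun w : ℝ => w ^ (1 - N)) ((1 - N) * v ^ (-N)) v := by
      have := Real.hasDerivAt_rpow_const (x := v) (p := 1 - N) (Or.inl hv.ne')
      convert this using 2; ring
    have h1 : HasDerivAt (fun w : ℝ => 2 * w / N) (2 / N) v := by
      have h0 : HasDerivAt (fun w : ℝ => 2 * w / N) (2 * 1 / N) v :=
        ((hasDerivAt_id v).const_mul 2).div_const N
      simpa using h0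
    have := h1.add (h2.const_mul (2 * cs * (2 - N)))
    refine this.congr_deriv ?_
    simp [hF2def]; ring
  have hF1a : F1 a = 0 := by
    simp only [hF1def]
    rw [hkey1]; field_simp; ring
  have hF2pos : ∀ v : ℝ, 0 < v → 0 < F2 v := by
    intro v hv
    have hp : 0 < v ^ (-N) := Real.rpow_pos_of_pos hv _
    have h2N : (0:ℝ) < 2 / N := by positivity
    have hX : 0 < 2 * cs * (2 - N) * (1 - N) * v ^ (-N) := by
      have : (0:ℝ) < 2 * cs * (2 - N) * (1 - N) := by
        nlinarith [mul_pos hcs0 (mul_pos hN2 (show (0:ℝ) < N - 1 by linarith))]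
      exact mul_pos this hp
    simp only [hF2def]
    linarith
  -- F1 > 0 on Ioi a, F > 0 on Ioi a
  have hcontF1 : ContinuousOn F1 (Ici a) := fun v hv =>
    ((hF1d v (lt_of_lt_of_le ha0 hv)).continuousAt).continuousWithinAt
  have hmonoF1 : StrictMonoOn F1 (Ici a) := by
    apply strictMonoOn_of_deriv_pos (convex_Ici a) hcontF1
    intro v hv
    rw [interior_Ici] at hv
    rw [(hF1d v (ha0.trans hv)).deriv]
    exact hF2pos v (ha0.trans hv)
  have hF1pos : ∀ v : ℝ, a < v → 0 < F1 v := by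
    intro v hv
    have := hmonoF1 (self_mem_Ici) (le_of_lt hv : a ≤ v) hv
    rwa [hF1a] at this
  have hcontF : ContinuousOn F (Ici a) := fun v hv =>
    ((hFd v (lt_of_lt_of_le ha0 hv)).continuousAt).continuousWithinAt
  have hmonoF : StrictMonoOn F (Ici a) := by
    apply strictMonoOn_of_deriv_pos (convex_Ici a) hcontF
    intro v hv
    rw [interior_Ici] at hv
    rw [(hFd v (ha0.trans hv)).deriv]
    exact hF1pos v hv
  have hFpos : ∀ v : ℝ, a < v → 0 < F v := by
    intro v hv
    have := hmonoF (self_mem_Ici) (le_of_lt hv : a ≤ v) hv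
    rwa [hFa] at this
  -- upper bound F v ≤ K/2 (v-a)^2 on Ici a
  set K : ℝ := F2 a with hKdef
  have hK0 : 0 < K := hF2pos a ha0
  have hF2le : ∀ v : ℝ, a ≤ v → F2 v ≤ K := by
    intro v hv
    have hv0 : 0 < v := lt_of_lt_of_le ha0 hv
    have h1 : v ^ (-N) ≤ a ^ (-N) := by
      rw [Real.rpow_neg hv0.le, Real.rpow_neg ha0.le]
      exact inv_anti₀ (Real.rpow_pos_of_pos ha0 _)
        (Real.rpow_le_rpow ha0.le hv hN0.le)
    have hc : 0 ≤ 2 * cs * (2 - N) * (1 - N) := by nlinarith [mul_pos hcs0 (mul_pos hN2 (show (0:ℝ) < N - 1 by linarith))]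
    simp only [hF2def, hKdef]
    nlinarith [mul_le_mul_of_nonneg_left h1 hc]
  have hFle : ∀ v : ℝ, a ≤ v → F v ≤ K / 2 * (v - a) ^ 2 := by
    intro v hv
    set G1 : ℝ → ℝ := fun w => K * (w - a) - F1 w with hG1def
    have hG1d : ∀ w : ℝ, 0 < w → HasDerivAt G1 (K - F2 w) w := by
      intro w hw
      exact ((hasDerivAt_id w).sub_const a |>.const_mul K).sub (hF1d w hw) |>.congr_deriv
        (by ring)
    have hG1mono : MonotoneOn G1 (Ici a) := by
      apply monotoneOn_of_deriv_nonneg (convex_Ici a)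
        (fun w hw => ((hG1d w (lt_of_lt_of_le ha0 hw)).continuousAt).continuousWithinAt)
        (fun w hw => by
          rw [interior_Ici] at hw
          exact ((hG1d w (ha0.trans hw)).differentiableAt).differentiableWithinAt)
      intro w hw
      rw [interior_Ici] at hw
      rw [(hG1d w (ha0.trans hw)).deriv]
      linarith [hF2le w hw.le]
    have hG1a : G1 a = 0 := by simp [hG1def, hF1a]
    have hG1nonneg : ∀ w : ℝ, a ≤ w → 0 ≤ G1 w := by
      intro w hw
      have := hG1mono self_mem_Ici hw hw
      rwa [hG1a] at this
    set G : ℝ → ℝ := fun w => K / 2 * (w - a) ^ 2 - F w with hGdef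
    have hGd : ∀ w : ℝ, 0 < w → HasDerivAt G (G1 w) w := by
      intro w hw
      have h1 : HasDerivAt (fun w : ℝ => K / 2 * (w - a) ^ 2) (K * (w - a)) w := by
        have h0 : HasDerivAt (fun w : ℝ => (w - a) ^ 2) (2 * (w - a)) w := by
          have := (hasDerivAt_pow 2 (w - a)).comp w ((hasDerivAt_id w).sub_const a)
          exact this.congr_deriv (by norm_num)
        exact (h0.const_mul (K / 2)).congr_deriv (by ring)
      exact (h1.sub (hFd w hw)).congr_deriv (by simp [hG1def])
    have hGmono : MonotoneOn G (Ici a) := by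
      apply monotoneOn_of_deriv_nonneg (convex_Ici a)
        (fun w hw => ((hGd w (lt_of_lt_of_le ha0 hw)).continuousAt).continuousWithinAt)
        (fun w hw => by
          rw [interior_Ici] at hw
          exact ((hGd w (ha0.trans hw)).differentiableAt).differentiableWithinAt)
      intro w hw
      rw [interior_Ici] at hw
      rw [(hGd w (ha0.trans hw)).deriv]
      exact hG1nonneg w hw.le
    have hGa : G a = 0 := by simp [hGdef, hFa]
    have := hGmono self_mem_Ici hv hv
    rw [hGa] at this
    simp only [hGdef] at this
    linarith
  -- upper bound F v ≤ C * v^2 for v ≥ 1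
  set C : ℝ := 1 / N + 2 * cs with hCdef
  have hC0 : 0 < C := by
    have : (0:ℝ) < 1 / N := by positivity
    simp only [hCdef]; linarith
  have hFle2 : ∀ v : ℝ, 1 ≤ v → F v ≤ C * v ^ 2 := by
    intro v hv
    have h1 : v ^ (2 - N) ≤ 1 := Real.rpow_le_one_of_one_le_of_nonpos hv (by linarith)
    have h2 : (1:ℝ) ≤ v ^ 2 := by nlinarith
    rw [hF, hCdef]
    have h3 : 2 * cs * v ^ (2 - N) ≤ 2 * cs * v ^ 2 := by nlinarith
    have h4 : (v ^ 2 - 1) / N ≤ v ^ 2 * (1/N) := by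
      rw [div_eq_mul_inv, one_div]
      have h5 : (0:ℝ) < N⁻¹ := by positivity
      nlinarith
    nlinarith
  -- the integrand g and the time function φ
  set g : ℝ → ℝ := fun x => (Real.sqrt (F x))⁻¹ with hgdef
  have hgpos : ∀ x ∈ Ioi a, 0 < g x := fun x hx =>
    inv_pos.2 (Real.sqrt_pos.2 (hFpos x hx))
  have hgcont : ContinuousOn g (Ioi a) := by
    apply ContinuousOn.inv₀
    · exact (hcontF.mono (Ioi_subset_Ici le_rfl)).sqrt
    · intro x hx; exact (Real.sqrt_pos.2 (hFpos x hx)).ne'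
  set φ : ℝ → ℝ := fun w => ∫ x in (1:ℝ)..w, g x with hφdef
  have hsub : ∀ w ∈ Ioi a, uIcc 1 w ⊆ Ioi a := by
    intro w hw x hx
    rcases Set.mem_uIcc.1 hx with ⟨h1, _⟩ | ⟨h1, _⟩
    · exact lt_of_lt_of_le ha1 h1
    · exact lt_of_lt_of_le hw h1
  have hint : ∀ w ∈ Ioi a, IntervalIntegrable g MeasureTheory.volume 1 w := fun w hw =>
    (hgcont.mono (hsub w hw)).intervalIntegrable
  have hφd : ∀ w ∈ Ioi a, HasDerivAt φ (g w) w := fun w hw =>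
    intervalIntegral.integral_hasDerivAt_right (hint w hw)
      (hgcont.stronglyMeasurableAtFilter isOpen_Ioi w hw)
      (hgcont.continuousAt (isOpen_Ioi.mem_nhds hw))
  have hφcont : ContinuousOn φ (Ioi a) := fun w hw =>
    (hφd w hw).continuousAt.continuousWithinAt
  have hφmono : StrictMonoOn φ (Ioi a) := by
    apply strictMonoOn_of_deriv_pos (convex_Ioi a) hφcont
    intro w hw
    rw [interior_Ioi] at hw
    rw [(hφd w hw).deriv]
    exact hgpos w hw
  have hφ1 : φ 1 = 0 := intervalIntegral.integral_same
  -- φ is unbounded above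
  have hφup : ∀ y : ℝ, ∃ w, a < w ∧ y < φ w := by
    intro y
    set s : ℝ := Real.sqrt C with hsdef
    have hs0 : 0 < s := Real.sqrt_pos.2 hC0
    set w : ℝ := max 1 (Real.exp (s * y + 1)) with hwdef
    have hw1 : 1 ≤ w := le_max_left _ _
    have hwa : a < w := lt_of_lt_of_le ha1 hw1
    have hlog : s * y + 1 ≤ Real.log w := by
      rw [← Real.log_exp (s * y + 1)]
      exact Real.log_le_log (Real.exp_pos _) (le_max_right _ _)
    have hpt : ∀ x ∈ Icc (1:ℝ) w, s⁻¹ * (1 / x) ≤ g x := by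
      intro x hx
      have hx1 : (1:ℝ) ≤ x := hx.1
      have hxa : a < x := lt_of_lt_of_le ha1 hx1
      have hFx : 0 < F x := hFpos x hxa
      have hle : Real.sqrt (F x) ≤ s * x := by
        have h6 := Real.sqrt_le_sqrt (hFle2 x hx1)
        rwa [Real.sqrt_mul hC0.le, Real.sqrt_sq (by linarith : (0:ℝ) ≤ x)] at h6
      have he : s⁻¹ * (1 / x) = (s * x)⁻¹ := by rw [one_div, mul_inv]
      rw [hgdef, he]
      exact inv_anti₀ (Real.sqrt_pos.2 hFx) hle
    have hz : (0:ℝ) ∉ uIcc (1:ℝ) w := by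
      intro h
      rcases Set.mem_uIcc.1 h with ⟨h1, _⟩ | ⟨h1, _⟩ <;> linarith
    have hint1 : IntervalIntegrable (fun x => s⁻¹ * (1 / x)) MeasureTheory.volume 1 w := by
      apply ContinuousOn.intervalIntegrable
      apply ContinuousOn.mul continuousOn_const
      apply ContinuousOn.div continuousOn_const continuousOn_id
      intro x hx
      intro h0
      exact hz (h0 ▸ hx)
    have hcomp : ∫ x in (1:ℝ)..w, s⁻¹ * (1 / x) ≤ φ w :=
      intervalIntegral.integral_mono_on hw1 hint1 (hint w hwa) hpt
    have hval : ∫ x in (1:ℝ)..w, s⁻¹ * (1 / x) = s⁻¹ * Real.log w := by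
      rw [intervalIntegral.integral_const_mul, integral_one_div hz, div_one]
    refine ⟨w, hwa, ?_⟩
    have h2 : s⁻¹ * (s * y + 1) ≤ s⁻¹ * Real.log w :=
      mul_le_mul_of_nonneg_left hlog (inv_nonneg.2 hs0.le)
    have h3 : s⁻¹ * (s * y + 1) = y + s⁻¹ := by field_simp
    have h4 : 0 < s⁻¹ := inv_pos.2 hs0
    rw [hval] at hcomp
    linarith
  -- φ is unbounded below
  have hφdown : ∀ y : ℝ, ∃ w, a < w ∧ φ w < y := by
    intro y
    set s : ℝ := Real.sqrt (K / 2) with hsdef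
    have hs0 : 0 < s := Real.sqrt_pos.2 (half_pos hK0)
    set E : ℝ := s * (|y| + 1) with hEdef
    have hy0 : 0 ≤ |y| := abs_nonneg y
    have hE0 : 0 < E := mul_pos hs0 (by linarith)
    set w : ℝ := a + (1 - a) * Real.exp (-E) with hwdef
    have hep : 0 < Real.exp (-E) := Real.exp_pos _
    have hwa' : w - a = (1 - a) * Real.exp (-E) := by rw [hwdef]; ring
    have hwa : a < w := by nlinarith
    have hexp1 : Real.exp (-E) < 1 := by
      rw [← Real.exp_zero]
      exact Real.exp_lt_exp.2 (by linarith)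
    have hw1 : w < 1 := by nlinarith
    have hsubw : uIcc w (1:ℝ) ⊆ Ioi a := by
      intro x hx
      rcases Set.mem_uIcc.1 hx with ⟨h1, _⟩ | ⟨h1, _⟩
      · exact lt_of_lt_of_le hwa h1
      · exact lt_of_lt_of_le ha1 h1
    have hpt : ∀ x ∈ Icc w 1, s⁻¹ * (x - a)⁻¹ ≤ g x := by
      intro x hx
      have hxa : a < x := lt_of_lt_of_le hwa hx.1
      have hFx : 0 < F x := hFpos x hxa
      have hle : Real.sqrt (F x) ≤ s * (x - a) := by
        have h6 := Real.sqrt_le_sqrt (hFle x hxa.le)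
        rwa [Real.sqrt_mul (half_pos hK0).le, Real.sqrt_sq (by linarith : (0:ℝ) ≤ x - a)] at h6
      rw [hgdef, ← mul_inv]
      exact inv_anti₀ (Real.sqrt_pos.2 hFx) hle
    have hintg : IntervalIntegrable g MeasureTheory.volume w 1 :=
      (hgcont.mono hsubw).intervalIntegrable
    have hint1 : IntervalIntegrable (fun x => s⁻¹ * (x - a)⁻¹) MeasureTheory.volume w 1 := by
      apply ContinuousOn.intervalIntegrable
      apply ContinuousOn.mul continuousOn_const
      apply ContinuousOn.inv₀ (by fun_prop)
      intro x hx
      have := hsubw hx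
      exact ne_of_gt (by linarith [mem_Ioi.1 this])
    have hcomp : ∫ x in w..(1:ℝ), s⁻¹ * (x - a)⁻¹ ≤ ∫ x in w..(1:ℝ), g x :=
      intervalIntegral.integral_mono_on hw1.le hint1 hintg hpt
    have hz : (0:ℝ) ∉ uIcc (w - a) (1 - a) := by
      intro h
      rcases Set.mem_uIcc.1 h with ⟨h1, _⟩ | ⟨h1, _⟩ <;> nlinarith
    have hval : ∫ x in w..(1:ℝ), s⁻¹ * (x - a)⁻¹ = s⁻¹ * E := by
      rw [intervalIntegral.integral_const_mul]
      have h1 : ∫ x in w..(1:ℝ), (x - a)⁻¹ = ∫ x in (w - a)..(1 - a), x⁻¹ :=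
        intervalIntegral.integral_comp_sub_right (fun x => x⁻¹) a
      have h2 : (1 - a) / (w - a) = Real.exp E := by
        have h1a : (0:ℝ) < 1 - a := by linarith
        rw [hwa', div_mul_eq_div_div, div_self h1a.ne', Real.exp_neg, one_div, inv_inv]
      rw [h1]
      simp only [← one_div]
      rw [integral_one_div hz, h2, Real.log_exp]
    have hφw : φ w = -∫ x in w..(1:ℝ), g x := by
      rw [hφdef]
      exact intervalIntegral.integral_symm w 1
    have hsE : s⁻¹ * E = |y| + 1 := by
      rw [hEdef]
      field_simp
    refine ⟨w, hwa, ?_⟩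
    rw [hφw]
    rw [hval, hsE] at hcomp
    have := neg_abs_le y
    linarith
  -- surjectivity of φ onto ℝ from (a, ∞)
  have hsurj : ∀ y : ℝ, ∃ w, a < w ∧ φ w = y := by
    intro y
    obtain ⟨w1, hw1a, hw1⟩ := hφdown y
    obtain ⟨w2, hw2a, hw2⟩ := hφup y
    have h12 : w1 < w2 := by
      by_contra h
      push_neg at h
      have := hφmono.monotoneOn (mem_Ioi.2 hw2a) (mem_Ioi.2 hw1a) h
      linarith
    have hIcc : Icc w1 w2 ⊆ Ioi a := fun x hx => lt_of_lt_of_le hw1a hx.1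
    obtain ⟨w, hwmem, hwy⟩ := intermediate_value_Icc h12.le (hφcont.mono hIcc)
      ⟨hw1.le, hw2.le⟩
    exact ⟨w, lt_of_lt_of_le hw1a hwmem.1, hwy⟩
  choose ψ hψa hψeq using hsurj
  have hψφ : ∀ w, a < w → ψ (φ w) = w := fun w hw =>
    hφmono.injOn (mem_Ioi.2 (hψa _)) (mem_Ioi.2 hw) (hψeq _)
  have hψmono : StrictMono ψ := by
    intro t s hts
    by_contra h
    push_neg at h
    have := hφmono.monotoneOn (mem_Ioi.2 (hψa s)) (mem_Ioi.2 (hψa t)) h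
    rw [hψeq, hψeq] at this
    linarith
  have hψcont : Continuous ψ := by
    rw [continuous_iff_continuousAt]
    intro t
    apply StrictMonoOn.continuousAt_of_image_mem_nhds (s := univ)
      (hψmono.strictMonoOn univ) univ_mem
    have hr : Ioi a ⊆ ψ '' univ := fun w hw => ⟨φ w, mem_univ _, hψφ w hw⟩
    exact mem_of_superset (isOpen_Ioi.mem_nhds (hψa t)) hr
  have hψ0 : ψ 0 = 1 := by
    have := hψφ 1 (by linarith)
    rwa [hφ1] at this
  have hψd : ∀ t, HasDerivAt ψ (Real.sqrt (F (ψ t))) t := by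
    intro t
    have h := HasDerivAt.of_local_left_inverse hψcont.continuousAt
      (hφd (ψ t) (mem_Ioi.2 (hψa t))) (ne_of_gt (hgpos _ (mem_Ioi.2 (hψa t))))
      (Eventually.of_forall hψeq)
    simpa [hgdef] using h
  -- uniqueness: every solution equals ψ
  have huniq : ∀ v : ℝ → ℝ, ((∀ t, a < v t) ∧ v 0 = 1 ∧
      ∀ t, HasDerivAt v (Real.sqrt (F (v t))) t) → v = ψ := by
    rintro v ⟨hv1, hv2, hv3⟩
    have hd : ∀ t, HasDerivAt (fun t => φ (v t) - t) 0 t := by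
      intro t
      have h1 := (hφd (v t) (mem_Ioi.2 (hv1 t))).comp t (hv3 t)
      have h2 := h1.sub (hasDerivAt_id t)
      refine h2.congr_deriv ?_
      have hne : Real.sqrt (F (v t)) ≠ 0 := ne_of_gt (Real.sqrt_pos.2 (hFpos _ (hv1 t)))
      simp only [hgdef]
      rw [inv_mul_cancel₀ hne]
      ring
    have hconst : ∀ t, φ (v t) - t = φ (v 0) - 0 := fun t =>
      is_const_of_deriv_eq_zero (fun s => (hd s).differentiableAt) (fun s => (hd s).deriv) t 0
    have hφv : ∀ t, φ (v t) = t := by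
      intro t
      have := hconst t
      rw [hv2, hφ1] at this
      linarith
    funext t
    have := hψφ (v t) (hv1 t)
    rw [hφv t] at this
    exact this.symm
  -- limits of ψ
  have hψbot : Tendsto ψ atBot (𝓝 a) := by
    rw [tendsto_order]
    constructor
    · intro b hb
      exact Eventually.of_forall fun t => lt_trans hb (hψa t)
    · intro b hb
      have hca : a < min b 1 := lt_min hb ha1
      filter_upwards [eventually_lt_atBot (φ (min b 1))] with t ht
      have h1 : ψ t < min b 1 := by
        by_contra h
        push_neg at h
        have := hφmono.monotoneOn (mem_Ioi.2 hca) (mem_Ioi.2 (hψa t)) h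
        rw [hψeq] at this
        linarith
      exact lt_of_lt_of_le h1 (min_le_left _ _)
  have hψtop : Tendsto ψ atTop atTop := by
    rw [tendsto_atTop]
    intro M
    have hca : a < max M 1 := lt_of_lt_of_le ha1 (le_max_right _ _)
    filter_upwards [eventually_gt_atTop (φ (max M 1))] with t ht
    have h1 : max M 1 < ψ t := by
      by_contra h
      push_neg at h
      have := hφmono.monotoneOn (mem_Ioi.2 (hψa t)) (mem_Ioi.2 hca) h
      rw [hψeq] at this
      linarith
    linarith [le_max_left M 1]
  refine ⟨⟨ψ, ⟨hψa, hψ0, hψd⟩, fun v hv => huniq v hv⟩, ?_⟩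
  intro v hv
  rw [huniq v hv]
  exact ⟨hψmono, hψbot, hψtop⟩
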